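/- Under the same assumptions (A symmetric, A𝟏=0, Ax=e_R−e_L, Ā invertible), with A⁺ the pseudoinverse formula above, one has AA⁺ = I − 𝟏𝟏ᵀ/(n+1). -/

import Mathlib

open Matrix

noncomputable section

def onesVec (n : ℕ) : Fin (n+1) → ℝ := fun _ => 1

def gridVec (n : ℕ) : Fin (n+1) → ℝ := fun i => (i : ℝ) / n

def eL (n : ℕ) : Fin (n+1) → ℝ := fun i => if i.1 = 0 then 1 else 0

def eR (n : ℕ) : Fin (n+1) → ℝ := fun i => if i.1 = n then 1 else 0

def interiorEmb (n : ℕ) : Fin (n-1) → Fin (n+1) :=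
  fun i => ⟨i.1 + 1, by have := i.isLt; omega⟩

def centralBlock (n : ℕ) (A : Matrix (Fin (n+1)) (Fin (n+1)) ℝ) :
    Matrix (Fin (n-1)) (Fin (n-1)) ℝ :=
  A.submatrix (interiorEmb n) (interiorEmb n)

def pad (n : ℕ) (B : Matrix (Fin (n-1)) (Fin (n-1)) ℝ) :
    Matrix (Fin (n+1)) (Fin (n+1)) ℝ :=
  fun i j =>
    if hi : 0 < i.1 ∧ i.1 < n then
      if hj : 0 < j.1 ∧ j.1 < n then
        B ⟨i.1 - 1, by omega⟩ ⟨j.1 - 1, by omega⟩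
      else 0
    else 0

def G2 (n : ℕ) (A : Matrix (Fin (n+1)) (Fin (n+1)) ℝ) :
    Matrix (Fin (n+1)) (Fin (n+1)) ℝ :=
  pad n (centralBlock n A)⁻¹

def Aplus (n : ℕ) (A : Matrix (Fin (n+1)) (Fin (n+1)) ℝ) :
    Matrix (Fin (n+1)) (Fin (n+1)) ℝ :=
  (1 - ((n : ℝ) + 1)⁻¹ • vecMulVec (onesVec n) (onesVec n)) * G2 n A *
      (1 - ((n : ℝ) + 1)⁻¹ • vecMulVec (onesVec n) (onesVec n)) +
    vecMulVec (gridVec n - (1/2 : ℝ) • onesVec n)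
      (gridVec n - (1/2 : ℝ) • onesVec n)

-- splitting of sums
lemma sum_split (n : ℕ) (hn : 2 ≤ n) (f : Fin (n+1) → ℝ) :
    ∑ k, f k = f ⟨0, by omega⟩ + f ⟨n, by omega⟩ +
      ∑ i : Fin (n-1), f (interiorEmb n i) := by
  classical
  have hinj : Function.Injective (interiorEmb n) := by
    intro a b hab
    simpa [interiorEmb, Fin.ext_iff] using hab
  have huniv : (Finset.univ : Finset (Fin (n+1))) =
      insert ⟨0, by omega⟩ (insert ⟨n, by omega⟩
        ((Finset.univ : Finset (Fin (n-1))).image (interiorEmb n))) := by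
    ext k
    simp only [Finset.mem_univ, Finset.mem_insert, Finset.mem_image, true_iff]
    by_cases h0 : k.1 = 0
    · left; exact Fin.ext h0
    · by_cases hN : k.1 = n
      · right; left; exact Fin.ext hN
      · right; right
        refine ⟨⟨k.1 - 1, by omega⟩, trivial, ?_⟩
        have := k.isLt
        exact Fin.ext (by simp [interiorEmb]; omega)
  rw [show (∑ k, f k) = ∑ k ∈ Finset.univ, f k from rfl, huniv]
  rw [Finset.sum_insert, Finset.sum_insert, Finset.sum_image (fun a _ b _ h => hinj h)]
  · ring
  · simp only [Finset.mem_image, Finset.mem_univ, true_and, not_exists]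
    intro a
    simp only [interiorEmb, Fin.ext_iff]; omega
  · simp only [Finset.mem_insert, Finset.mem_image, not_or, not_exists]
    constructor
    · simp only [Fin.ext_iff]; omega
    · intro a
      simp only [Finset.mem_univ, true_and, interiorEmb, Fin.ext_iff]
      have := a.isLt; omega

lemma G2_zero_left (n : ℕ) (A : Matrix (Fin (n+1)) (Fin (n+1)) ℝ)
    (k j : Fin (n+1)) (hk : ¬ (0 < k.1 ∧ k.1 < n)) : G2 n A k j = 0 := by
  simp only [G2, pad]; exact dif_neg hk

lemma G2_zero_right (n : ℕ) (A : Matrix (Fin (n+1)) (Fin (n+1)) ℝ)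
    (k j : Fin (n+1)) (hj : ¬ (0 < j.1 ∧ j.1 < n)) : G2 n A k j = 0 := by
  by_cases hk : 0 < k.1 ∧ k.1 < n
  · simp only [G2, pad]; rw [dif_pos hk, dif_neg hj]
  · simp only [G2, pad]; exact dif_neg hk


lemma AG2 (n : ℕ) (hn : 2 ≤ n) (A : Matrix (Fin (n+1)) (Fin (n+1)) ℝ)
    (hsym : A.IsSymm)
    (h1 : A *ᵥ onesVec n = 0)
    (hx : A *ᵥ gridVec n = eR n - eL n)
    (hinv : IsUnit (centralBlock n A).det) :
    A * G2 n A = 1 - vecMulVec (eL n) (onesVec n - gridVec n)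
      - vecMulVec (eR n) (gridVec n) := by
  classical
  have hn0 : (n : ℝ) ≠ 0 := by positivity
  have hApp : ∀ i j : Fin (n+1), A i j = A j i := by
    intro i j
    conv_lhs => rw [← hsym]
    rfl
  ext i j
  simp only [Matrix.sub_apply, Matrix.mul_apply, vecMulVec_apply, Pi.sub_apply]
  by_cases hj : 0 < j.1 ∧ j.1 < n
  · -- interior column
    set j' : Fin (n-1) := ⟨j.1 - 1, by omega⟩ with hj'def
    have hembj : interiorEmb n j' = j := by
      apply Fin.ext; simp [interiorEmb, hj'def]; omega
    set w : Fin (n+1) → ℝ := fun i => ∑ k, A i k * G2 n A k j with hw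
    -- interior values
    have hwint : ∀ i' : Fin (n-1),
        w (interiorEmb n i') = (1 : Matrix (Fin (n-1)) (Fin (n-1)) ℝ) i' j' := by
      intro i'
      have hBB : centralBlock n A * (centralBlock n A)⁻¹ = 1 :=
        Matrix.mul_nonsing_inv _ hinv
      have : w (interiorEmb n i')
          = ∑ k', centralBlock n A i' k' * (centralBlock n A)⁻¹ k' j' := by
        show (∑ k : Fin (n+1), A (interiorEmb n i') k * G2 n A k j) = _
        rw [sum_split n hn (fun k => A (interiorEmb n i') k * G2 n A k j)]
        rw [G2_zero_left n A _ j (by simp), G2_zero_left n A _ j (by simp)]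
        simp only [mul_zero, add_zero, zero_add]
        apply Finset.sum_congr rfl
        intro k' _
        have hk' := k'.isLt
        have hG : G2 n A (interiorEmb n k') j = (centralBlock n A)⁻¹ k' j' := by
          simp only [G2, pad]
          rw [dif_pos (show 0 < (interiorEmb n k').1 ∧ (interiorEmb n k').1 < n by
            simp only [interiorEmb]; omega), dif_pos hj]
          congr 1
        rw [hG]
        rfl
      rw [this, ← Matrix.mul_apply, hBB]
    -- constraint C1
    have hC1 : ∑ i, w i = 0 := by
      rw [hw]
      rw [Finset.sum_comm]
      have : ∀ k : Fin (n+1), ∑ i, A i k * G2 n A k j = 0 := by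
        intro k
        rw [← Finset.sum_mul]
        have : ∑ i, A i k = 0 := by
          have := congrFun h1 k
          simpa [Matrix.mulVec, dotProduct, onesVec, hApp k] using this
        rw [this, zero_mul]
      simp [this]
    -- constraint C2
    have hC2 : ∑ i, gridVec n i * w i = 0 := by
      rw [hw]
      have step : ∀ k : Fin (n+1),
          ∑ i, gridVec n i * (A i k * G2 n A k j)
            = (eR n k - eL n k) * G2 n A k j := by
        intro k
        have h2 : ∑ i, gridVec n i * A i k = eR n k - eL n k := by
          have := congrFun hx k
          simp only [Matrix.mulVec, dotProduct, Pi.sub_apply] at this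
          rw [← this]
          apply Finset.sum_congr rfl
          intro i _
          rw [hApp i k]; ring
        calc ∑ i, gridVec n i * (A i k * G2 n A k j)
            = (∑ i, gridVec n i * A i k) * G2 n A k j := by
              rw [Finset.sum_mul]; apply Finset.sum_congr rfl; intros; ring
          _ = (eR n k - eL n k) * G2 n A k j := by rw [h2]
      calc ∑ i, gridVec n i * ∑ k, A i k * G2 n A k j
          = ∑ i, ∑ k, gridVec n i * (A i k * G2 n A k j) := by
            apply Finset.sum_congr rfl; intros; rw [Finset.mul_sum]
        _ = ∑ k, ∑ i, gridVec n i * (A i k * G2 n A k j) := Finset.sum_comm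
        _ = ∑ k, (eR n k - eL n k) * G2 n A k j := by
            apply Finset.sum_congr rfl; intros k _; exact step k
        _ = 0 := by
            apply Finset.sum_eq_zero
            intro k _
            by_cases hk : 0 < k.1 ∧ k.1 < n
            · have : eR n k = 0 ∧ eL n k = 0 := by
                constructor <;> simp only [eR, eL] <;> rw [if_neg (by omega)]
              rw [this.1, this.2]; ring
            · rw [G2_zero_left n A _ j hk, mul_zero]
    -- identity column sum
    have hcol : ∑ i' : Fin (n-1), (1 : Matrix (Fin (n-1)) (Fin (n-1)) ℝ) i' j' = 1 := by
      simp [Matrix.one_apply]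
    have hgridcol : ∑ i' : Fin (n-1),
        gridVec n (interiorEmb n i') * (1 : Matrix (Fin (n-1)) (Fin (n-1)) ℝ) i' j'
        = gridVec n j := by
      rw [Finset.sum_eq_single j']
      · rw [Matrix.one_apply_eq, mul_one, hembj]
      · intro b _ hb; rw [Matrix.one_apply_ne hb, mul_zero]
      · intro h; exact absurd (Finset.mem_univ _) h
    -- evaluate constraints
    rw [sum_split n hn w] at hC1
    rw [sum_split n hn (fun i => gridVec n i * w i)] at hC2
    simp only [hwint] at hC1 hC2
    rw [hcol] at hC1
    rw [hgridcol] at hC2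
    have hg0 : gridVec n ⟨0, by omega⟩ = 0 := by simp [gridVec]
    have hgn : gridVec n ⟨n, by omega⟩ = 1 := by
      simp only [gridVec]; exact div_self hn0
    rw [hg0, hgn] at hC2
    have hwn : w ⟨n, by omega⟩ = -gridVec n j := by linarith
    have hw0 : w ⟨0, by omega⟩ = gridVec n j - 1 := by linarith
    -- now the goal, by cases on i
    show w i = _
    have honesj : onesVec n j = 1 := rfl
    by_cases hi0 : i.1 = 0
    · have hieq : i = ⟨0, by omega⟩ := Fin.ext hi0
      have hne : i ≠ j := by
        intro hc; rw [hc] at hi0; omega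
      have h1ij : (1 : Matrix (Fin (n+1)) (Fin (n+1)) ℝ) i j = 0 :=
        Matrix.one_apply_ne hne
      have heLi : eL n i = 1 := by simp [eL, hi0]
      have heRi : eR n i = 0 := by simp only [eR, hi0]; rw [if_neg (by omega)]
      rw [hieq, hw0, ← hieq, h1ij, heLi, heRi, honesj]
      ring
    · by_cases hin : i.1 = n
      · have hieq : i = ⟨n, by omega⟩ := Fin.ext hin
        have hne : i ≠ j := by
          intro hc; rw [hc] at hin; omega
        have h1ij : (1 : Matrix (Fin (n+1)) (Fin (n+1)) ℝ) i j = 0 :=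
          Matrix.one_apply_ne hne
        have heLi : eL n i = 0 := by simp only [eL, hin]; rw [if_neg (by omega)]
        have heRi : eR n i = 1 := by simp [eR, hin]
        rw [hieq, hwn, ← hieq, h1ij, heLi, heRi, honesj]
        ring
      · have hii : 0 < i.1 ∧ i.1 < n := by have := i.isLt; omega
        set i' : Fin (n-1) := ⟨i.1 - 1, by omega⟩ with hi'def
        have hembi : interiorEmb n i' = i := by
          apply Fin.ext; simp [interiorEmb, hi'def]; omega
        have heLi : eL n i = 0 := by simp only [eL]; rw [if_neg (by omega)]
        have heRi : eR n i = 0 := by simp only [eR]; rw [if_neg (by omega)]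
        rw [← hembi, hwint i', hembi, heLi, heRi]
        have h11 : ((1 : Matrix (Fin (n-1)) (Fin (n-1)) ℝ) i' j')
            = (1 : Matrix (Fin (n+1)) (Fin (n+1)) ℝ) i j := by
          by_cases h : i' = j'
          · have hij : i = j := by
              apply Fin.ext
              simp only [hi'def, hj'def, Fin.ext_iff] at h; omega
            rw [h, hij, Matrix.one_apply_eq, Matrix.one_apply_eq]
          · have hij : i ≠ j := by
              intro hc; apply h
              apply Fin.ext; simp [hi'def, hj'def, hc]
            rw [Matrix.one_apply_ne h, Matrix.one_apply_ne hij]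
        rw [h11]; ring
  · -- boundary column
    have hz : ∑ k, A i k * G2 n A k j = 0 := by
      apply Finset.sum_eq_zero
      intro k _
      rw [G2_zero_right n A k j hj, mul_zero]
    rw [hz]
    have honesj : onesVec n j = 1 := rfl
    have hj2 := j.isLt
    rcases (by omega : j.1 = 0 ∨ j.1 = n) with h | h
    · have hg : gridVec n j = 0 := by simp [gridVec, h]
      by_cases hij : i = j
      · subst hij
        have heLi : eL n i = 1 := by simp [eL, h]
        have heRi : eR n i = 0 := by simp only [eR, h]; rw [if_neg (by omega)]
        rw [Matrix.one_apply_eq, heLi, heRi, honesj, hg]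
        ring
      · have h1 : (1 : Matrix (Fin (n+1)) (Fin (n+1)) ℝ) i j = 0 :=
          Matrix.one_apply_ne hij
        have heLi : eL n i = 0 := by
          simp only [eL]
          rw [if_neg (fun hc => hij (Fin.ext (by omega)))]
        rw [h1, heLi, hg]
        ring
    · have hg : gridVec n j = 1 := by
        simp only [gridVec, h]; field_simp
      by_cases hij : i = j
      · subst hij
        have heLi : eL n i = 0 := by simp only [eL, h]; rw [if_neg (by omega)]
        have heRi : eR n i = 1 := by simp [eR, h]
        rw [Matrix.one_apply_eq, heLi, heRi, honesj, hg]
        ring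
      · have h1 : (1 : Matrix (Fin (n+1)) (Fin (n+1)) ℝ) i j = 0 :=
          Matrix.one_apply_ne hij
        have heRi : eR n i = 0 := by
          simp only [eR]
          rw [if_neg (fun hc => hij (Fin.ext (by omega)))]
        rw [h1, heRi, honesj, hg]
        ring

lemma mul_vmv (n : ℕ) (A : Matrix (Fin (n+1)) (Fin (n+1)) ℝ)
    (u v : Fin (n+1) → ℝ) :
    A * vecMulVec u v = vecMulVec (A *ᵥ u) v := by
  ext i j
  simp only [Matrix.mul_apply, vecMulVec_apply, Matrix.mulVec, dotProduct,
    Finset.sum_mul]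
  apply Finset.sum_congr rfl
  intros; ring

lemma vmv_mul (n : ℕ) (B : Matrix (Fin (n+1)) (Fin (n+1)) ℝ)
    (u v : Fin (n+1) → ℝ) :
    vecMulVec u v * B = vecMulVec u (v ᵥ* B) := by
  ext i j
  simp only [Matrix.mul_apply, vecMulVec_apply, Matrix.vecMul, dotProduct,
    Finset.mul_sum]
  apply Finset.sum_congr rfl
  intros; ring

lemma vecMul_P (n : ℕ) (c : ℝ) (v : Fin (n+1) → ℝ) :
    v ᵥ* (1 - c • vecMulVec (onesVec n) (onesVec n))
      = v - (c * ∑ i, v i) • onesVec n := by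
  funext j
  simp only [Matrix.vecMul, dotProduct, Matrix.sub_apply, Matrix.smul_apply,
    vecMulVec_apply, onesVec, Matrix.one_apply, Pi.sub_apply, Pi.smul_apply,
    smul_eq_mul, mul_one]
  have key : ∀ x : Fin (n+1), v x * ((if x = j then 1 else 0) - c)
      = (if x = j then v x else 0) - c * v x := by
    intro x; by_cases h : x = j <;> simp [h] <;> ring
  rw [Finset.sum_congr rfl (fun x _ => key x), Finset.sum_sub_distrib,
    Finset.sum_ite_eq' Finset.univ j (fun x => v x), ← Finset.mul_sum]
  simp

lemma sum_onesVec (n : ℕ) : ∑ i, onesVec n i = (n : ℝ) + 1 := by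
  simp [onesVec]

lemma sum_gridVec (n : ℕ) (hn : 2 ≤ n) : ∑ i, gridVec n i = ((n : ℝ) + 1) / 2 := by
  have hn0 : (n : ℝ) ≠ 0 := by positivity
  have h2 : ((∑ i ∈ Finset.range (n+1), (i:ℕ)) : ℝ) * 2 = ((n:ℝ)+1) * n := by
    have := congrArg (Nat.cast (R := ℝ)) (Finset.sum_range_id_mul_two (n+1))
    push_cast at this
    linarith
  have hsum : ∑ i : Fin (n+1), ((i : ℕ) : ℝ) = ((n:ℝ)+1) * n / 2 := by
    rw [Fin.sum_univ_eq_sum_range (fun i => ((i:ℕ):ℝ))]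
    push_cast at h2 ⊢
    linarith
  simp only [gridVec, div_eq_mul_inv, ← Finset.sum_mul]
  rw [hsum]
  field_simp


theorem A_mul_Aplus_eq_proj
    (n : ℕ) (hn : 2 ≤ n) (A : Matrix (Fin (n+1)) (Fin (n+1)) ℝ)
    (hsym : A.IsSymm)
    (h1 : A *ᵥ onesVec n = 0)
    (hx : A *ᵥ gridVec n = eR n - eL n)
    (hinv : IsUnit (centralBlock n A).det) :
    A * Aplus n A = 1 - ((n : ℝ) + 1)⁻¹ • vecMulVec (onesVec n) (onesVec n) := by
  have hn1 : (n : ℝ) + 1 ≠ 0 := by positivity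
  set c : ℝ := ((n : ℝ) + 1)⁻¹ with hc
  set P : Matrix (Fin (n+1)) (Fin (n+1)) ℝ :=
    1 - c • vecMulVec (onesVec n) (onesVec n) with hP
  set y : Fin (n+1) → ℝ := gridVec n - (1/2 : ℝ) • onesVec n with hy
  -- A * P = A
  have hAP : A * P = A := by
    rw [hP, Matrix.mul_sub, Matrix.mul_one, Matrix.mul_smul, mul_vmv, h1]
    have : vecMulVec (0 : Fin (n+1) → ℝ) (onesVec n) = 0 := by
      ext i j; simp [vecMulVec_apply]
    rw [this, smul_zero, sub_zero]
  -- A *ᵥ y = eR - eL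
  have hAy : A *ᵥ y = eR n - eL n := by
    rw [hy, Matrix.mulVec_sub, Matrix.mulVec_smul, hx, h1, smul_zero, sub_zero]
  -- vecMul against P
  have hgP : gridVec n ᵥ* P = y := by
    rw [hP, vecMul_P, sum_gridVec n hn, hy]
    congr 1
    rw [hc]
    field_simp
  have honesgP : (onesVec n - gridVec n) ᵥ* P = -y := by
    have hsum : ∑ i, (onesVec n - gridVec n) i = ((n:ℝ)+1)/2 := by
      simp only [Pi.sub_apply, Finset.sum_sub_distrib, sum_onesVec,
        sum_gridVec n hn]
      ring
    rw [hP, vecMul_P, hsum, hy]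
    funext i
    simp only [Pi.sub_apply, Pi.neg_apply, Pi.smul_apply, smul_eq_mul, hc]
    have : ((n:ℝ)+1)⁻¹ * (((n:ℝ)+1)/2) = 1/2 := by field_simp
    rw [this]
    simp [onesVec]
    ring
  -- assemble
  have hAG2P : A * G2 n A * P = P - vecMulVec (eL n) (-y) - vecMulVec (eR n) y := by
    rw [AG2 n hn A hsym h1 hx hinv, Matrix.sub_mul, Matrix.sub_mul, Matrix.one_mul,
      vmv_mul, vmv_mul, hgP, honesgP]
  calc A * Aplus n A
      = A * P * G2 n A * P + A * vecMulVec y y := by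
        rw [Aplus, Matrix.mul_add, ← hP, ← hy,
          ← Matrix.mul_assoc A (P * G2 n A) P, ← Matrix.mul_assoc A P (G2 n A)]
    _ = P - vecMulVec (eL n) (-y) - vecMulVec (eR n) y
          + vecMulVec (eR n - eL n) y := by
        rw [hAP, hAG2P, mul_vmv, hAy]
    _ = P := by
        ext i j
        simp only [Matrix.add_apply, Matrix.sub_apply, vecMulVec_apply,
          Pi.neg_apply, Pi.sub_apply]
        ring
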